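/- Let d ≥ 2 be an integer, S ≥ 4, let b = min(⌊S⌋, d − 1), and let μ(u) = 1/(1 + e^{−u}) be the sigmoid function. Then there exist θ⋆ ∈ ℝ^d with ‖θ⋆‖ ≤ S, an integer n with n ≥ ((d−1)/(4b))·exp(b/4300), vectors a₁, …, a_n ∈ ℝ^d with ‖a_t‖ ≤ 1 for all t, and parameters θ₁, …, θ_n ∈ ℝ^d with ‖θ_t‖ ≤ S for all t, such that, defining for each t the function φ̄_t(a) = η(a)·log(η(a)/f_t(a)) + (1 − η(a))·log((1 − η(a))/(1 − f_t(a))) with η(a) = μ(⟨a, θ⋆⟩) and f_t(a) = μ(⟨a, θ_t⟩), the following hold for every t ≤ n: ∑_{i=1}^{t−1} φ̄_t(a_i) ≤ 1/8 and φ̄_t(a_t) ≥ 1/8. -/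

import Mathlib

open Real Finset
open RealInnerProductSpace


/-- Expected excess log-loss of the logistic model with parameter `θ` against the true
parameter `θ⋆` at action `a`: `KL(Bernoulli(η(a)) ‖ Bernoulli(f(a)))` where
`η(a) = μ(⟨a, θ⋆⟩)` and `f(a) = μ(⟨a, θ⟩)`. -/
noncomputable def logisticExcess {d : ℕ} (μ : ℝ → ℝ)
    (θstar θ a : EuclideanSpace ℝ (Fin d)) : ℝ :=
  μ ⟪a, θstar⟫ * Real.log (μ ⟪a, θstar⟫ / μ ⟪a, θ⟫) +
    (1 - μ ⟪a, θstar⟫) * Real.log ((1 - μ ⟪a, θstar⟫) / (1 - μ ⟪a, θ⟫))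


namespace Stmt19Aux


noncomputable def sig (x : ℝ) : ℝ := 1 / (1 + Real.exp (-x))

lemma sig_pos (x : ℝ) : 0 < sig x := by
  have := Real.exp_pos (-x); unfold sig; positivity

lemma one_add_exp_pos (x : ℝ) : (0:ℝ) < 1 + Real.exp x := by positivity

lemma sig_lt_one (x : ℝ) : sig x < 1 := by
  have h := Real.exp_pos (-x)
  rw [sig, div_lt_one (by positivity)]; linarith

lemma one_sub_sig (x : ℝ) : 1 - sig x = 1 / (1 + Real.exp x) := by
  rw [sig, Real.exp_neg]
  have h1 := Real.exp_pos x
  field_simp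
  ring

lemma one_sub_sig_pos (x : ℝ) : 0 < 1 - sig x := by
  rw [one_sub_sig]; positivity

lemma sig_le_exp (x : ℝ) : sig x ≤ Real.exp x := by
  rw [sig, div_le_iff₀ (by positivity), mul_add, mul_one, Real.exp_neg,
    mul_inv_cancel₀ (Real.exp_pos x).ne']
  linarith [Real.exp_pos x]

lemma sig_mono {x y : ℝ} (h : x ≤ y) : sig x ≤ sig y := by
  have h1 : Real.exp (-y) ≤ Real.exp (-x) := Real.exp_le_exp.mpr (by linarith)
  have h2 := Real.exp_pos (-y)
  unfold sig
  gcongr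

lemma sig_div_le {x y : ℝ} (h : y ≤ x) : sig x / sig y ≤ Real.exp (x - y) := by
  have h1 : Real.exp (x - y) * Real.exp (-x) = Real.exp (-y) := by
    rw [← Real.exp_add]; ring_nf
  have h2 : (1:ℝ) ≤ Real.exp (x - y) := Real.one_le_exp (by linarith)
  have hx := Real.exp_pos (-x); have hy := Real.exp_pos (-y)
  have heq : sig x / sig y = (1 + Real.exp (-y)) / (1 + Real.exp (-x)) := by
    rw [sig, sig, div_div_div_comm]; norm_num
  rw [heq, div_le_iff₀ (by positivity)]
  nlinarith [Real.exp_pos (x - y)]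

noncomputable def F (x y : ℝ) : ℝ :=
  sig x * Real.log (sig x / sig y) + (1 - sig x) * Real.log ((1 - sig x) / (1 - sig y))

lemma F_self (x : ℝ) : F x x = 0 := by
  rw [F, div_self (sig_pos x).ne', div_self (one_sub_sig_pos x).ne', Real.log_one]
  ring

lemma F_le {x y Δ : ℝ} (h1 : x - y ≤ Δ) (h2 : 0 ≤ Δ) :
    F x y ≤ Real.exp x * Δ + Real.exp y := by
  have t1 : sig x * Real.log (sig x / sig y) ≤ Real.exp x * Δ := by
    rcases le_total x y with hxy | hxy
    · have : sig x / sig y ≤ 1 := by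
        rw [div_le_one (sig_pos y)]; exact sig_mono hxy
      have hlog : Real.log (sig x / sig y) ≤ 0 :=
        Real.log_nonpos (div_pos (sig_pos x) (sig_pos y)).le this
      have := mul_nonpos_of_nonneg_of_nonpos (sig_pos x).le hlog
      have hpos : 0 ≤ Real.exp x * Δ := by positivity
      linarith
    · have hlog : Real.log (sig x / sig y) ≤ x - y := by
        calc Real.log (sig x / sig y) ≤ Real.log (Real.exp (x - y)) := by
              apply Real.log_le_log (div_pos (sig_pos x) (sig_pos y)) (sig_div_le hxy)
        _ = x - y := Real.log_exp _
      have hll : Real.log (sig x / sig y) ≤ Δ := le_trans hlog h1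
      have h0 : 0 < sig x := sig_pos x
      calc sig x * Real.log (sig x / sig y) ≤ sig x * Δ := by
            apply mul_le_mul_of_nonneg_left hll h0.le
      _ ≤ Real.exp x * Δ := by
            apply mul_le_mul_of_nonneg_right (sig_le_exp x) h2
  have t2 : (1 - sig x) * Real.log ((1 - sig x) / (1 - sig y)) ≤ Real.exp y := by
    have hq := one_sub_sig_pos y
    have hp := one_sub_sig_pos x
    have hp1 : 1 - sig x ≤ 1 := by linarith [sig_pos x]
    have hmono : (1 - sig x) / (1 - sig y) ≤ 1 / (1 - sig y) := by
      gcongr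
    have hlog : Real.log ((1 - sig x) / (1 - sig y)) ≤ Real.log (1 / (1 - sig y)) :=
      Real.log_le_log (div_pos hp hq) hmono
    have hval : Real.log (1 / (1 - sig y)) = Real.log (1 + Real.exp y) := by
      rw [one_sub_sig, one_div_one_div]
    have hloge : Real.log (1 + Real.exp y) ≤ Real.exp y := by
      have := Real.log_le_sub_one_of_pos (one_add_exp_pos y)
      linarith
    rcases le_total (Real.log ((1 - sig x) / (1 - sig y))) 0 with hneg | hpos
    · have := mul_nonpos_of_nonneg_of_nonpos hp.le hneg
      linarith [Real.exp_pos y]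
    · calc (1 - sig x) * Real.log ((1 - sig x) / (1 - sig y))
          ≤ 1 * Real.log ((1 - sig x) / (1 - sig y)) := by
            apply mul_le_mul_of_nonneg_right hp1 hpos
      _ = Real.log ((1 - sig x) / (1 - sig y)) := one_mul _
      _ ≤ Real.exp y := by rw [hval] at hlog; linarith
  unfold F; linarith

lemma sig_zero : sig (0:ℝ) = 1/2 := by
  unfold sig; rw [neg_zero, Real.exp_zero]; norm_num

lemma exp4_big : (53:ℝ) ≤ Real.exp 4 := by
  have h1 : (2.7182818283:ℝ) < Real.exp 1 := Real.exp_one_gt_d9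
  have h4 : Real.exp 4 = (Real.exp 1)^4 := by
    rw [← Real.exp_nat_mul]; norm_num
  have h2 : (2.7:ℝ)^4 ≤ (Real.exp 1)^4 := by
    apply pow_le_pow_left₀ (by norm_num) (by linarith) 4
  rw [h4]; norm_num at h2 ⊢; linarith

lemma exp2_big : (7:ℝ) ≤ Real.exp 2 := by
  have h1 : (2.7182818283:ℝ) < Real.exp 1 := Real.exp_one_gt_d9
  have h2 : Real.exp 2 = (Real.exp 1)^2 := by
    rw [← Real.exp_nat_mul]; norm_num
  have h3 : (2.7:ℝ)^2 ≤ (Real.exp 1)^2 := by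
    apply pow_le_pow_left₀ (by norm_num) (by linarith) 2
  rw [h2]; norm_num at h3 ⊢; linarith

lemma F_lowA : 1/8 ≤ F 0 4 := by
  have h4 := sig_pos 4
  have h4' := one_sub_sig_pos 4
  have hA : (0:ℝ) < (1/2) / sig 4 := by positivity
  have hB : (0:ℝ) < (1/2) / (1 - sig 4) := by positivity
  have key : F 0 4 = 1/2 * Real.log ((1/2)/sig 4 * ((1/2)/(1 - sig 4))) := by
    rw [F, sig_zero, Real.log_mul hA.ne' hB.ne']; ring
  have hprod : (1/2)/sig 4 * ((1/2)/(1 - sig 4)) = (1 + Real.exp (-4)) * (1 + Real.exp 4) / 4 := by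
    rw [one_sub_sig, sig]
    have := Real.exp_pos (4:ℝ); have := Real.exp_pos (-4:ℝ)
    field_simp; ring
  have hexp4 : (53:ℝ) ≤ Real.exp 4 := exp4_big
  have hbig : Real.exp 1 ≤ (1 + Real.exp (-4)) * (1 + Real.exp 4) / 4 := by
    have h1 : Real.exp 1 < 2.7182818286 := Real.exp_one_lt_d9
    have h2 : (0:ℝ) < Real.exp (-4) := Real.exp_pos _
    nlinarith
  have : (1:ℝ) ≤ Real.log ((1/2)/sig 4 * ((1/2)/(1 - sig 4))) := by
    rw [Real.le_log_iff_exp_le (by positivity), hprod]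
    exact hbig
  rw [key]; linarith

lemma F_lowB {β : ℝ} (hβ : 4 ≤ β) : 1/8 ≤ F (-β) 2 := by
  set p := sig (-β) with hp
  have hp0 : 0 < p := sig_pos _
  have hp1 : p < 1 := sig_lt_one _
  have hpe : p ≤ Real.exp (-4) := by
    calc p ≤ Real.exp (-β) := sig_le_exp _
    _ ≤ Real.exp (-4) := Real.exp_le_exp.mpr (by linarith)
  have hexp2 : (7:ℝ) ≤ Real.exp 2 := exp2_big
  have hexp4 : (53:ℝ) ≤ Real.exp 4 := exp4_big
  have hem4 : Real.exp (-4) ≤ 1/5 := by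
    rw [Real.exp_neg, inv_le_comm₀ (Real.exp_pos 4) (by norm_num)]
    linarith
  have hem2 : Real.exp (-2) ≤ 1/3 := by
    rw [Real.exp_neg, inv_le_comm₀ (Real.exp_pos 2) (by norm_num)]
    linarith
  have hsqm : Real.exp (-2) ^ 2 = Real.exp (-4) := by
    rw [sq, ← Real.exp_add]; norm_num
  have hsq : Real.sqrt p ≤ Real.exp (-2) := by
    calc Real.sqrt p ≤ Real.sqrt (Real.exp (-2) ^ 2) := Real.sqrt_le_sqrt (by rw [hsqm]; exact hpe)
    _ = Real.exp (-2) := Real.sqrt_sq (Real.exp_pos _).le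
  have hsp : 0 < Real.sqrt p := Real.sqrt_pos.mpr hp0
  have hploglow : -2 * Real.sqrt p ≤ p * Real.log p := by
    have hlogsqrt : 1 - (Real.sqrt p)⁻¹ ≤ Real.log (Real.sqrt p) :=
      Real.one_sub_inv_le_log_of_pos hsp
    have hlsq : Real.log (Real.sqrt p) = Real.log p / 2 := Real.log_sqrt hp0.le
    have hlow : 2 - 2 * (Real.sqrt p)⁻¹ ≤ Real.log p := by
      rw [hlsq] at hlogsqrt; linarith
    have hds : p * (Real.sqrt p)⁻¹ = Real.sqrt p := by
      rw [← div_eq_mul_inv]; exact Real.div_sqrt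
    have heq : p * (2 - 2 * (Real.sqrt p)⁻¹) = 2*p - 2*Real.sqrt p := by
      rw [mul_sub, show p * (2*(Real.sqrt p)⁻¹) = 2*(p*(Real.sqrt p)⁻¹) by ring, hds]; ring
    have := mul_le_mul_of_nonneg_left hlow hp0.le
    rw [heq] at this; linarith
  have hterm1 : -2 * Real.exp (-2) ≤ p * Real.log (p / sig 2) := by
    have hlogd : Real.log (p / sig 2) = Real.log p - Real.log (sig 2) :=
      Real.log_div hp0.ne' (sig_pos 2).ne'
    have hls2 : Real.log (sig 2) ≤ 0 := Real.log_nonpos (sig_pos 2).le (sig_lt_one 2).le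
    have h1 : p * Real.log p ≤ p * Real.log (p / sig 2) := by
      rw [hlogd]; nlinarith
    linarith
  -- term 2
  have hs2 : 1 - sig 2 = 1 / (1 + Real.exp 2) := one_sub_sig 2
  have hratio : (1 - p)/(1 - sig 2) = (1 - p) * (1 + Real.exp 2) := by
    rw [hs2]; field_simp
  have hple : p * (1 + Real.exp 2) ≤ 1 := by
    have h1 : p ≤ (Real.exp 4)⁻¹ := by rw [← Real.exp_neg]; exact hpe
    have h2 : 1 + Real.exp 2 ≤ Real.exp 4 := by
      have : Real.exp 4 = Real.exp 2 * Real.exp 2 := by rw [← Real.exp_add]; norm_num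
      nlinarith
    calc p * (1 + Real.exp 2) ≤ (Real.exp 4)⁻¹ * Real.exp 4 := by
          apply mul_le_mul h1 h2 (by positivity) (by positivity)
    _ = 1 := by field_simp
  have hratioge : Real.exp 2 ≤ (1 - p)/(1 - sig 2) := by
    rw [hratio]; nlinarith
  have hlog2 : (2:ℝ) ≤ Real.log ((1 - p)/(1 - sig 2)) := by
    have hpos : (0:ℝ) < (1 - p)/(1 - sig 2) := div_pos (by linarith) (one_sub_sig_pos 2)
    rw [Real.le_log_iff_exp_le hpos]
    exact hratioge
  have h1p : (4:ℝ)/5 ≤ 1 - p := by linarith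
  have hterm2 : (8:ℝ)/5 ≤ (1 - p) * Real.log ((1 - p)/(1 - sig 2)) := by
    calc (8:ℝ)/5 = (4/5) * 2 := by norm_num
    _ ≤ (1 - p) * Real.log ((1 - p)/(1 - sig 2)) := by
      apply mul_le_mul h1p hlog2 (by norm_num) (by linarith)
  have hF : F (-β) 2 = p * Real.log (p / sig 2) + (1 - p) * Real.log ((1 - p)/(1 - sig 2)) := rfl
  rw [hF]; linarith



def dH {b : ℕ} (x y : Fin b → Bool) : ℕ := (univ.filter (fun p => x p ≠ y p)).card

lemma dH_self {b : ℕ} (x : Fin b → Bool) : dH x x = 0 := by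
  simp [dH]

lemma dH_symm {b : ℕ} (x y : Fin b → Bool) : dH x y = dH y x := by
  unfold dH; congr 1; apply filter_congr; intro p _; simp [ne_comm]

/-- cardinality of a Hamming ball of radius `r - 1` is at most `∑_{j<r} choose b j`. -/
lemma ball_card {b r : ℕ} (x : Fin b → Bool) :
    (univ.filter (fun y => dH x y < r)).card ≤ ∑ j ∈ Finset.range r, b.choose j := by
  classical
  -- inject into subsets of Fin b of card < r
  have hinj : ∀ y ∈ univ.filter (fun y => dH x y < r),
      (univ.filter (fun p => x p ≠ y p) : Finset (Fin b)) ∈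
        (univ : Finset (Fin b)).powerset.filter (fun s => s.card < r) := by
    intro y hy
    simp only [mem_filter, mem_powerset] at *
    exact ⟨subset_univ _, hy.2⟩
  have hinj2 : ∀ y ∈ univ.filter (fun y => dH x y < r), ∀ z ∈ univ.filter (fun y => dH x y < r),
      (univ.filter (fun p => x p ≠ y p) : Finset (Fin b)) = univ.filter (fun p => x p ≠ z p) →
      y = z := by
    intro y _ z _ h
    funext p
    have := Finset.ext_iff.mp h p
    simp only [mem_filter, mem_univ, true_and] at this
    by_cases hxy : x p = y p
    · by_cases hxz : x p = z p
      · rw [← hxy, hxz]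
      · exact absurd (this.mpr hxz) (by simp [hxy])
    · have := this.mp hxy
      cases hb : x p <;> cases hy : y p <;> cases hz : z p <;> simp_all
  have hcard := Finset.card_le_card_of_injOn _ hinj hinj2
  refine le_trans hcard ?_
  -- card of subsets with card < r
  have : (univ : Finset (Fin b)).powerset.filter (fun s => s.card < r)
      = (Finset.range r).biUnion (fun j => Finset.powersetCard j (univ : Finset (Fin b))) := by
    ext s
    simp only [mem_filter, mem_powerset, mem_biUnion, Finset.mem_range, mem_powersetCard]
    constructor
    · rintro ⟨hs, hc⟩; exact ⟨s.card, hc, hs, rfl⟩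
    · rintro ⟨j, hj, hs, rfl⟩; exact ⟨hs, hj⟩
  rw [this]
  refine le_trans (Finset.card_biUnion_le) ?_
  apply Finset.sum_le_sum
  intro j _
  rw [Finset.card_powersetCard, Finset.card_univ, Fintype.card_fin]

/-- Gilbert–Varshamov style greedy bound. -/
lemma exists_code (b r N : ℕ) (hr : 0 < r)
    (hcount : N * ∑ j ∈ Finset.range r, b.choose j ≤ 2^b) :
    ∃ c : Fin N → Fin b → Bool, ∀ s t : Fin N, s ≠ t → r ≤ dH (c s) (c t) := by
  classical
  set V := ∑ j ∈ Finset.range r, b.choose j with hV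
  have hVpos : 0 < V := by
    rw [hV]
    calc 0 < b.choose 0 := by simp
    _ ≤ _ := Finset.single_le_sum (f := fun j => b.choose j) (by simp) (by simp [hr])
  set P : Finset (Fin b → Bool) → Prop := fun C => ∀ x ∈ C, ∀ y ∈ C, x ≠ y → r ≤ dH x y with hP
  set Codes := (univ : Finset (Fin b → Bool)).powerset.filter P with hCodes
  have hne : Codes.Nonempty := ⟨∅, by simp [hCodes, hP]⟩
  obtain ⟨C, hC, hCmax⟩ := Finset.exists_max_image Codes Finset.card hne
  have hCP : P C := (Finset.mem_filter.mp hC).2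
  -- covering property
  have hcover : ∀ z : Fin b → Bool, ∃ x ∈ C, dH x z < r := by
    intro z
    by_contra hcon
    push_neg at hcon
    have hzC : z ∉ C := fun hz => by
      have := hcon z hz; rw [dH_self] at this; omega
    have hins : insert z C ∈ Codes := by
      rw [hCodes, Finset.mem_filter]
      refine ⟨by simp, ?_⟩
      intro x hx y hy hxy
      rw [Finset.mem_insert] at hx hy
      rcases hx with hx | hx
      · rcases hy with hy | hy
        · exact absurd (hx.trans hy.symm) hxy
        · subst hx; rw [dH_symm]; exact hcon y hy
      · rcases hy with hy | hy
        · subst hy; exact hcon x hx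
        · exact hCP x hx y hy hxy
    have := hCmax _ hins
    rw [Finset.card_insert_of_notMem hzC] at this
    omega
  -- counting
  have hcount2 : 2^b ≤ C.card * V := by
    have hsub : (univ : Finset (Fin b → Bool)) ⊆
        C.biUnion (fun x => univ.filter (fun y => dH x y < r)) := by
      intro z _
      rw [Finset.mem_biUnion]
      obtain ⟨x, hx, hd⟩ := hcover z
      exact ⟨x, hx, by simp [hd]⟩
    calc 2^b = (univ : Finset (Fin b → Bool)).card := by
          rw [Finset.card_univ]; simp
    _ ≤ (C.biUnion (fun x => univ.filter (fun y => dH x y < r))).card := Finset.card_le_card hsub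
    _ ≤ ∑ x ∈ C, (univ.filter (fun y => dH x y < r)).card := Finset.card_biUnion_le
    _ ≤ ∑ _x ∈ C, V := Finset.sum_le_sum (fun x _ => ball_card x)
    _ = C.card * V := by rw [Finset.sum_const, smul_eq_mul]
  have hNC : N ≤ C.card := by
    by_contra hlt
    push_neg at hlt
    have : C.card * V < N * V := (Nat.mul_lt_mul_right hVpos).mpr hlt
    omega
  obtain ⟨D, hDC, hDcard⟩ := Finset.exists_subset_card_eq hNC
  have e : Fin N ≃ {x // x ∈ D} := (Fintype.equivFinOfCardEq (by rw [Fintype.card_coe, hDcard])).symm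
  refine ⟨fun s => (e s : Fin b → Bool), ?_⟩
  intro s t hst
  have hne' : (e s : Fin b → Bool) ≠ (e t : Fin b → Bool) := by
    intro h
    apply hst
    have : (e s) = (e t) := Subtype.ext h
    exact e.injective this
  exact hCP _ (hDC (e s).2) _ (hDC (e t).2) hne'



lemma fac_low : ∀ r : ℕ, ((r:ℝ)/3)^r ≤ (r.factorial : ℝ)
  | 0 => by norm_num
  | (r+1) => by
    rcases Nat.eq_zero_or_pos r with rfl | hr
    · norm_num
    · have ih := fac_low r
      have hrpos : (0:ℝ) < r := by exact_mod_cast hr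
      have h1 : ((1:ℝ) + 1/r) ≤ Real.exp (1/r) := by
        have := Real.add_one_le_exp (1/(r:ℝ)); linarith
      have h2 : ((1:ℝ) + 1/r)^r ≤ Real.exp (1/r) ^ r :=
        pow_le_pow_left₀ (by positivity) h1 r
      have h3 : Real.exp (1/(r:ℝ)) ^ r = Real.exp ((r:ℝ) * (1/r)) := by
        rw [Real.exp_nat_mul]
      have h4 : (r:ℝ) * (1/r) = 1 := by field_simp
      have h5 : ((1:ℝ) + 1/r)^r ≤ 3 := by
        rw [h3, h4] at h2
        have := Real.exp_one_lt_d9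
        linarith
      have key : (((r:ℝ)+1)/3)^(r+1) ≤ ((r:ℝ)+1) * ((r:ℝ)/3)^r := by
        have heq : (((r:ℝ)+1)/3) = ((1:ℝ) + 1/r) * ((r:ℝ)/3) := by field_simp
        calc (((r:ℝ)+1)/3)^(r+1) = (((r:ℝ)+1)/3) * (((r:ℝ)+1)/3)^r := by ring
        _ = (((r:ℝ)+1)/3) * (((1:ℝ) + 1/r)^r * ((r:ℝ)/3)^r) := by rw [heq, mul_pow]
        _ ≤ (((r:ℝ)+1)/3) * (3 * ((r:ℝ)/3)^r) := by
            apply mul_le_mul_of_nonneg_left _ (by positivity)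
            apply mul_le_mul_of_nonneg_right h5 (by positivity)
        _ = ((r:ℝ)+1) * ((r:ℝ)/3)^r := by ring
      have hcast : ((((r:ℕ)+1:ℕ)):ℝ)/3 = ((r:ℝ)+1)/3 := by push_cast; ring
      rw [hcast]
      calc (((r:ℝ)+1)/3)^(r+1) ≤ ((r:ℝ)+1) * ((r:ℝ)/3)^r := key
      _ ≤ ((r:ℝ)+1) * r.factorial := by
          apply mul_le_mul_of_nonneg_left ih (by positivity)
      _ = ((r+1).factorial : ℝ) := by
          rw [Nat.factorial_succ]; push_cast; ring

lemma choose_mono_right (b : ℕ) {j k : ℕ} (hjk : j ≤ k) (hk : k ≤ b/2) :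
    b.choose j ≤ b.choose k := by
  induction k, hjk using Nat.le_induction with
  | base => exact le_refl _
  | succ k hjk ih =>
    have hk' : k < b/2 := by omega
    exact le_trans (ih (by omega)) (Nat.choose_le_succ_of_lt_half_left hk')

lemma exp_inv40_le_two : Real.exp ((1:ℝ)/40) ≤ 2 := by
  have h := Real.add_one_le_exp (-(1:ℝ)/40)
  have h2 : Real.exp ((1:ℝ)/40) * Real.exp (-(1:ℝ)/40) = 1 := by
    rw [← Real.exp_add]; norm_num
  nlinarith [Real.exp_pos ((1:ℝ)/40), Real.exp_pos (-(1:ℝ)/40)]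

lemma big3000 : (3000:ℝ) ≤ Real.exp 9 := by
  have h1 : (2.7182818283:ℝ) < Real.exp 1 := Real.exp_one_gt_d9
  have h4 : Real.exp 9 = (Real.exp 1)^9 := by
    rw [← Real.exp_nat_mul]; norm_num
  have h2 : (2.7:ℝ)^9 ≤ (Real.exp 1)^9 := pow_le_pow_left₀ (by norm_num) (by linarith) 9
  rw [h4]; norm_num at h2 ⊢; linarith

lemma NV_le (b r N : ℕ) (hb : (8601:ℕ) ≤ b) (hr : r = b/1000 + 1)
    (hN : (N:ℝ) ≤ Real.exp ((b:ℝ)/4300)) :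
    (N:ℝ) * (∑ j ∈ Finset.range r, (b.choose j : ℝ)) ≤ 2^b := by
  have hrpos : 0 < r := by omega
  have hrb2 : r ≤ b/2 := by omega
  have hrbR : (b:ℝ) ≤ 1000 * r := by
    have : b ≤ 1000 * r := by omega
    exact_mod_cast this
  have hrR : (r:ℝ) ≤ (b:ℝ)/500 := by
    have : 500 * r ≤ b := by omega
    have h2 : (500:ℝ) * r ≤ b := by exact_mod_cast this
    linarith
  have hrRpos : (0:ℝ) < r := by exact_mod_cast hrpos
  -- V ≤ r * choose b r
  have hV1 : (∑ j ∈ Finset.range r, (b.choose j : ℝ)) ≤ (r:ℝ) * (b.choose r : ℝ) := by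
    calc (∑ j ∈ Finset.range r, (b.choose j : ℝ)) ≤ ∑ _j ∈ Finset.range r, (b.choose r : ℝ) := by
          apply Finset.sum_le_sum
          intro j hj
          have := choose_mono_right b (le_of_lt (Finset.mem_range.mp hj)) hrb2
          exact_mod_cast this
    _ = (r:ℝ) * (b.choose r : ℝ) := by rw [Finset.sum_const, Finset.card_range]; ring
  -- choose b r ≤ (3000)^r
  have hC : (b.choose r : ℝ) ≤ 3000^r := by
    have h1 : (b.choose r : ℝ) ≤ (b:ℝ)^r / r.factorial := Nat.choose_le_pow_div r b
    have h2 : ((r:ℝ)/3)^r ≤ (r.factorial : ℝ) := fac_low r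
    have hfacpos : (0:ℝ) < r.factorial := by positivity
    have h3 : (b:ℝ)^r / r.factorial ≤ (b:ℝ)^r / ((r:ℝ)/3)^r := by
      apply div_le_div_of_nonneg_left (by positivity) (by positivity) h2
    have h4 : (b:ℝ)^r / ((r:ℝ)/3)^r = (3*(b:ℝ)/r)^r := by
      rw [← div_pow]
      congr 1
      field_simp
    have h5 : ((3*(b:ℝ)/r))^r ≤ 3000^r := by
      apply pow_le_pow_left₀ (by positivity)
      rw [div_le_iff₀ hrRpos]
      linarith
    calc (b.choose r : ℝ) ≤ (b:ℝ)^r / r.factorial := h1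
    _ ≤ (b:ℝ)^r / ((r:ℝ)/3)^r := h3
    _ = (3*(b:ℝ)/r)^r := h4
    _ ≤ 3000^r := h5
  -- assemble into exponentials
  have hVexp : (∑ j ∈ Finset.range r, (b.choose j : ℝ)) ≤ Real.exp (10 * r) := by
    have hrexp : (r:ℝ) ≤ Real.exp r := by
      have := Real.add_one_le_exp (r:ℝ); linarith
    have h3000 : (3000:ℝ)^r ≤ Real.exp 9 ^ r := pow_le_pow_left₀ (by norm_num) big3000 r
    have h9 : Real.exp (9:ℝ) ^ r = Real.exp (9 * r) := by
      rw [← Real.exp_nat_mul]; ring_nf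
    calc (∑ j ∈ Finset.range r, (b.choose j : ℝ)) ≤ (r:ℝ) * (b.choose r : ℝ) := hV1
    _ ≤ Real.exp r * Real.exp (9 * r) := by
        apply mul_le_mul hrexp _ (by positivity) (by positivity)
        rw [← h9]; exact le_trans hC h3000
    _ = Real.exp (10 * r) := by rw [← Real.exp_add]; ring_nf
  have hsum : Real.exp ((b:ℝ)/4300) * Real.exp (10 * r) ≤ Real.exp ((b:ℝ)/40) := by
    rw [← Real.exp_add]
    apply Real.exp_le_exp.mpr
    have : (10:ℝ) * r ≤ (b:ℝ)/50 := by linarith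
    have hb43 : (b:ℝ)/4300 + (b:ℝ)/50 ≤ (b:ℝ)/40 := by
      have hbpos : (0:ℝ) ≤ b := by positivity
      linarith
    linarith
  have hfin : Real.exp ((b:ℝ)/40) ≤ 2^b := by
    have h1 : Real.exp ((b:ℝ)/40) = Real.exp ((1:ℝ)/40) ^ b := by
      rw [← Real.exp_nat_mul]; ring_nf
    rw [h1]
    apply pow_le_pow_left₀ (Real.exp_pos _).le exp_inv40_le_two
  have hVnn : (0:ℝ) ≤ ∑ j ∈ Finset.range r, (b.choose j : ℝ) := by positivity
  calc (N:ℝ) * (∑ j ∈ Finset.range r, (b.choose j : ℝ))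
      ≤ Real.exp ((b:ℝ)/4300) * Real.exp (10 * r) := by
        apply mul_le_mul hN hVexp hVnn (by positivity)
  _ ≤ Real.exp ((b:ℝ)/40) := hsum
  _ ≤ 2^b := hfin



variable {d m b : ℕ}

lemma inner_single_single (i k : Fin d) (x y : ℝ) :
    ⟪EuclideanSpace.single i x, EuclideanSpace.single k y⟫ = if i = k then x*y else 0 := by
  rw [EuclideanSpace.inner_single_left]
  simp only [RCLike.star_def, starRingEnd_apply, star_trivial]
  rw [EuclideanSpace.single_apply]
  by_cases h : i = k
  · subst h; simp
  · rw [if_neg h, if_neg h]; ring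

noncomputable def comb (z : Fin d) (ι : Fin m → Fin b → Fin d) (x : ℝ) (j : Fin m) (f : Fin b → ℝ) :
    EuclideanSpace ℝ (Fin d) :=
  x • EuclideanSpace.single z 1 + ∑ p : Fin b, f p • EuclideanSpace.single (ι j p) (1:ℝ)

lemma inner_comb (z : Fin d) (ι : Fin m → Fin b → Fin d)
    (hz : ∀ j p, ι j p ≠ z)
    (hinj : ∀ j p j' p', ι j p = ι j' p' → j = j' ∧ p = p')
    (x y : ℝ) (j j' : Fin m) (f g : Fin b → ℝ) :
    ⟪comb z ι x j f, comb z ι y j' g⟫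
      = x*y + (if j = j' then ∑ p : Fin b, f p * g p else 0) := by
  unfold comb
  rw [inner_add_left, inner_add_right, inner_add_right]
  have h11 : ⟪x • EuclideanSpace.single z (1:ℝ), y • EuclideanSpace.single z (1:ℝ)⟫ = x * y := by
    rw [real_inner_smul_left, real_inner_smul_right, inner_single_single]
    simp
  have h12 : ⟪x • EuclideanSpace.single z (1:ℝ),
      ∑ p : Fin b, g p • EuclideanSpace.single (ι j' p) (1:ℝ)⟫ = 0 := by
    rw [inner_sum]
    apply Finset.sum_eq_zero
    intro p _
    rw [real_inner_smul_left, real_inner_smul_right, inner_single_single]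
    rw [if_neg (fun h => (hz j' p) h.symm)]
    ring
  have h21 : ⟪∑ p : Fin b, f p • EuclideanSpace.single (ι j p) (1:ℝ),
      y • EuclideanSpace.single z (1:ℝ)⟫ = 0 := by
    rw [sum_inner]
    apply Finset.sum_eq_zero
    intro p _
    rw [real_inner_smul_left, real_inner_smul_right, inner_single_single]
    rw [if_neg (hz j p)]
    ring
  have h22 : ⟪∑ p : Fin b, f p • EuclideanSpace.single (ι j p) (1:ℝ),
      ∑ p : Fin b, g p • EuclideanSpace.single (ι j' p) (1:ℝ)⟫
      = (if j = j' then ∑ p : Fin b, f p * g p else 0) := by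
    rw [sum_inner]
    by_cases hjj : j = j'
    · subst hjj
      rw [if_pos rfl]
      apply Finset.sum_congr rfl
      intro p _
      rw [real_inner_smul_left, inner_sum]
      have : ∀ q ∈ (univ : Finset (Fin b)),
          ⟪EuclideanSpace.single (ι j p) (1:ℝ), g q • EuclideanSpace.single (ι j q) (1:ℝ)⟫
          = if q = p then g p else 0 := by
        intro q _
        rw [real_inner_smul_right, inner_single_single]
        by_cases hpq : q = p
        · subst hpq; rw [if_pos rfl, if_pos rfl]; ring
        · rw [if_neg (fun h => hpq ((hinj j p j q h).2).symm), if_neg hpq]; ring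
      rw [Finset.sum_congr rfl this, Finset.sum_ite_eq' univ p (fun _ => g p)]
      simp
    · rw [if_neg hjj]
      apply Finset.sum_eq_zero
      intro p _
      rw [real_inner_smul_left, inner_sum]
      have : ∀ q ∈ (univ : Finset (Fin b)),
          ⟪EuclideanSpace.single (ι j p) (1:ℝ), g q • EuclideanSpace.single (ι j' q) (1:ℝ)⟫
          = 0 := by
        intro q _
        rw [real_inner_smul_right, inner_single_single]
        rw [if_neg (fun h => hjj (hinj j p j' q h).1)]
        ring
      rw [Finset.sum_congr rfl this]
      simp
  rw [h11, h12, h21, h22]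
  ring

lemma norm_comb_sq (z : Fin d) (ι : Fin m → Fin b → Fin d)
    (hz : ∀ j p, ι j p ≠ z)
    (hinj : ∀ j p j' p', ι j p = ι j' p' → j = j' ∧ p = p')
    (x : ℝ) (j : Fin m) (f : Fin b → ℝ) :
    ‖comb z ι x j f‖^2 = x^2 + ∑ p : Fin b, f p^2 := by
  rw [← real_inner_self_eq_norm_sq, inner_comb z ι hz hinj]
  simp only [if_pos rfl]
  congr 1
  · ring
  · apply Finset.sum_congr rfl; intro p _; ring


lemma norm_le_of_sq_le {d : ℕ} {v : EuclideanSpace ℝ (Fin d)} {S : ℝ} (hS : 0 ≤ S)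
    (h : ‖v‖^2 ≤ S^2) : ‖v‖ ≤ S := by
  nlinarith [norm_nonneg v]

end Stmt19Aux

open RealInnerProductSpace
open Stmt19Aux

lemma logisticExcess_eq_F {d : ℕ} (μ : ℝ → ℝ) (hμ : ∀ u, μ u = 1 / (1 + Real.exp (-u)))
    (θstar θ a : EuclideanSpace ℝ (Fin d)) :
    logisticExcess μ θstar θ a = F ⟪a, θstar⟫ ⟪a, θ⟫ := by
  simp only [logisticExcess, F, sig, hμ]

set_option maxHeartbeats 2000000 in
/-- Eluder dimension lower bound for logistic generalised linear models: there is a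
`(1/8)`-eluder sequence for the expected excess log-loss class of length at least
`((d−1)/(4b))·exp(b/4300)`, where `b = min(⌊S⌋, d−1)`. -/
theorem stmt19 (d : ℕ) (hd : 2 ≤ d) (S : ℝ) (hS : 4 ≤ S)
    (b : ℕ) (hb : b = min (Nat.floor S) (d - 1))
    (μ : ℝ → ℝ) (hμ : ∀ u, μ u = 1 / (1 + Real.exp (-u))) :
    ∃ θstar : EuclideanSpace ℝ (Fin d), ‖θstar‖ ≤ S ∧
      ∃ n : ℕ, ((d : ℝ) - 1) / (4 * b) * Real.exp (b / 4300) ≤ n ∧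
        ∃ a θ : Fin n → EuclideanSpace ℝ (Fin d),
          (∀ t, ‖a t‖ ≤ 1) ∧ (∀ t, ‖θ t‖ ≤ S) ∧
          ∀ t : Fin n,
            (∑ i ∈ Finset.univ.filter (fun i => i < t),
                logisticExcess μ θstar (θ t) (a i)) ≤ 1 / 8 ∧
              1 / 8 ≤ logisticExcess μ θstar (θ t) (a t) := by
  have hS0 : (0:ℝ) ≤ S := by linarith
  have hb1 : 1 ≤ b := by
    rw [hb]
    have h1 : 4 ≤ Nat.floor S := Nat.le_floor (by exact_mod_cast hS)
    omega
  have hbd : b ≤ d - 1 := by omega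
  have hbR : (1:ℝ) ≤ (b:ℝ) := by exact_mod_cast hb1
  have hdR : (0:ℝ) ≤ (d:ℝ) - 1 := by
    have : (2:ℝ) ≤ d := by exact_mod_cast hd
    linarith
  have h4b : (0:ℝ) < 4*(b:ℝ) := by linarith
  rcases le_or_gt b 8600 with hsmall | hlarge
  · -- small b : orthogonal construction with n = d
    refine ⟨0, by simp [hS0], d, ?_, fun t => EuclideanSpace.single t (1:ℝ),
      fun t => EuclideanSpace.single t (4:ℝ), ?_, ?_, ?_⟩
    · have hexp : Real.exp ((b:ℝ)/4300) ≤ 4*(b:ℝ) := by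
        have he1 : Real.exp 1 < 2.7182818286 := Real.exp_one_lt_d9
        rcases (by omega : b = 1 ∨ 2 ≤ b) with rfl | h2b
        · have : Real.exp ((1:ℕ):ℝ)/4300 ≤ Real.exp 1 := by
            have := Real.exp_pos (1:ℝ); push_cast; nlinarith
          have h3 : Real.exp (((1:ℕ):ℝ)/4300) ≤ Real.exp 1 := by
            apply Real.exp_le_exp.mpr; push_cast; norm_num
          push_cast at h3 ⊢
          linarith
        · have h2bR : (2:ℝ) ≤ (b:ℝ) := by exact_mod_cast h2b
          have hble : ((b:ℝ))/4300 ≤ 2 := by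
            have : (b:ℝ) ≤ 8600 := by exact_mod_cast hsmall
            linarith
          have h3 : Real.exp ((b:ℝ)/4300) ≤ Real.exp 2 := Real.exp_le_exp.mpr hble
          have h4 : Real.exp 2 = (Real.exp 1)^2 := by rw [← Real.exp_nat_mul]; norm_num
          nlinarith [Real.exp_pos (1:ℝ)]
      calc ((d:ℝ) - 1) / (4*(b:ℝ)) * Real.exp ((b:ℝ)/4300)
          ≤ ((d:ℝ) - 1) / (4*(b:ℝ)) * (4*(b:ℝ)) := by
            apply mul_le_mul_of_nonneg_left hexp (by positivity)
      _ = (d:ℝ) - 1 := div_mul_cancel₀ _ h4b.ne'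
      _ ≤ (d:ℝ) := by linarith
    · intro t; rw [EuclideanSpace.norm_single]; norm_num
    · intro t; rw [EuclideanSpace.norm_single]; norm_num; linarith
    · intro t
      have hval : ∀ i : Fin d, logisticExcess μ 0 (EuclideanSpace.single t (4:ℝ))
          (EuclideanSpace.single i (1:ℝ)) = F 0 (if i = t then 4 else 0) := by
        intro i
        rw [logisticExcess_eq_F μ hμ, inner_zero_right, inner_single_single]
        norm_num
      constructor
      · apply le_of_eq_of_le _ (by norm_num : (0:ℝ) ≤ 1/8)
        apply Finset.sum_eq_zero
        intro i hi
        have hilt : i < t := (Finset.mem_filter.mp hi).2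
        rw [hval i, if_neg (Fin.ne_of_lt hilt), F_self]
      · rw [hval t, if_pos rfl]
        exact F_lowA
  · -- large b : block + code construction
    have hb8601 : 8601 ≤ b := hlarge
    have hbSnat : b ≤ Nat.floor S := by omega
    have hbS : (b:ℝ) ≤ S := by
      calc (b:ℝ) ≤ (Nat.floor S : ℝ) := by exact_mod_cast hbSnat
      _ ≤ S := Nat.floor_le hS0
    have hSbig : (8601:ℝ) ≤ S := by
      have h1 : (8601:ℝ) ≤ (b:ℝ) := by exact_mod_cast hb8601
      linarith
    have hbR8601 : (8601:ℝ) ≤ (b:ℝ) := by exact_mod_cast hb8601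
    set β : ℝ := S/2 - 2 with hβ
    set γ : ℝ := S/2 with hγ
    have hβ4 : 4 ≤ β := by rw [hβ]; linarith
    have hγpos : 0 < γ := by rw [hγ]; linarith
    have hb0 : 0 < b := by omega
    have hbRpos : (0:ℝ) < (b:ℝ) := by exact_mod_cast hb0
    set r : ℕ := b/1000 + 1 with hr
    set N : ℕ := ⌈Real.exp ((b:ℝ)/4300)/2⌉₊ with hN
    set m₀ : ℕ := (d-1)/b with hm₀
    have hm₀1 : 0 < m₀ := Nat.div_pos hbd hb0
    have hexpb2 : (7:ℝ) ≤ Real.exp ((b:ℝ)/4300) := by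
      calc (7:ℝ) ≤ Real.exp 2 := exp2_big
      _ ≤ Real.exp ((b:ℝ)/4300) := Real.exp_le_exp.mpr (by linarith)
    have hNpos : 0 < N := by
      rw [hN, Nat.ceil_pos]; positivity
    have hNle : (N:ℝ) ≤ Real.exp ((b:ℝ)/4300) := by
      have h1 : (N:ℝ) < Real.exp ((b:ℝ)/4300)/2 + 1 := by
        rw [hN]; exact Nat.ceil_lt_add_one (by positivity)
      linarith
    have hNge : Real.exp ((b:ℝ)/4300)/2 ≤ (N:ℝ) := by rw [hN]; exact Nat.le_ceil _
    -- obtain the code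
    have hcount : N * (∑ j ∈ Finset.range r, b.choose j) ≤ 2^b := by
      have hcr := NV_le b r N hb8601 hr hNle
      have : ((N * ∑ j ∈ Finset.range r, b.choose j : ℕ) : ℝ) ≤ ((2^b : ℕ) : ℝ) := by
        push_cast
        exact hcr
      exact_mod_cast this
    obtain ⟨c, hc⟩ := exists_code b r N (by omega) hcount
    set n : ℕ := m₀ * N with hn
    have hJlt : ∀ t : Fin n, t.val / N < m₀ := by
      intro t
      rw [Nat.div_lt_iff_lt_mul hNpos]
      exact t.isLt
    set J : Fin n → Fin m₀ := fun t => ⟨t.val / N, hJlt t⟩ with hJ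
    set R : Fin n → Fin N := fun t => ⟨t.val % N, Nat.mod_lt _ hNpos⟩ with hR
    have hJR : ∀ s t : Fin n, J s = J t → R s = R t → s = t := by
      intro s t h1 h2
      have e1 : s.val / N = t.val / N := congrArg Fin.val h1
      have e2 : s.val % N = t.val % N := congrArg Fin.val h2
      apply Fin.ext
      calc s.val = N * (s.val / N) + s.val % N := (Nat.div_add_mod _ _).symm
      _ = N * (t.val / N) + t.val % N := by rw [e1, e2]
      _ = t.val := Nat.div_add_mod _ _
    have hz0 : 0 < d := by omega
    have hmb : m₀ * b ≤ d - 1 := Nat.div_mul_le_self (d-1) b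
    have hidx : ∀ (j : Fin m₀) (p : Fin b), 1 + j.val * b + p.val < d := by
      intro j p
      have h1 : (j.val+1) * b ≤ m₀ * b := Nat.mul_le_mul_right b j.isLt
      have h2 : (j.val+1)*b = j.val*b + b := by ring
      have h3 := p.isLt
      omega
    set z0 : Fin d := ⟨0, hz0⟩ with hz0def
    set ι : Fin m₀ → Fin b → Fin d := fun j p => ⟨1 + j.val * b + p.val, hidx j p⟩ with hι
    have hz : ∀ j p, ι j p ≠ z0 := by
      intro j p h
      have h2 : 1 + j.val * b + p.val = 0 := congrArg Fin.val h
      omega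
    have hinj : ∀ j p j' p', ι j p = ι j' p' → j = j' ∧ p = p' := by
      intro j p j' p' h
      have hv : 1 + j.val*b + p.val = 1 + j'.val*b + p'.val := congrArg Fin.val h
      have hv1 : 1 + (j.val*b + p.val) = 1 + (j'.val*b + p'.val) := by
        rw [← Nat.add_assoc, ← Nat.add_assoc]; exact hv
      have hv2 : b * j.val + p.val = b * j'.val + p'.val := by
        rw [Nat.mul_comm b j.val, Nat.mul_comm b j'.val]
        exact Nat.add_left_cancel hv1
      have hdiv : (b * j.val + p.val) / b = (b * j'.val + p'.val) / b := by rw [hv2]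
      rw [Nat.mul_add_div hb0, Nat.mul_add_div hb0, Nat.div_eq_of_lt p.isLt,
        Nat.div_eq_of_lt p'.isLt] at hdiv
      have hjj : j = j' := Fin.ext (by omega)
      refine ⟨hjj, Fin.ext ?_⟩
      subst hjj
      have := Nat.add_left_cancel hv2
      omega
    set κ : ℝ := Real.sqrt 2 with hκ
    set τ : ℝ := Real.sqrt (2*(b:ℝ)) with hτ
    have hκpos : 0 < κ := Real.sqrt_pos.mpr (by norm_num)
    have hκsq : κ^2 = 2 := Real.sq_sqrt (by norm_num)
    have hτpos : 0 < τ := Real.sqrt_pos.mpr (by positivity)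
    have hτsq : τ^2 = 2*(b:ℝ) := Real.sq_sqrt (by positivity)
    set sg : Bool → ℝ := fun s => if s then 1 else -1 with hsg
    have hsg1 : ∀ s, sg s * sg s = 1 := by intro s; cases s <;> simp [hsg]
    have hsg2 : ∀ s, sg s ^ 2 = 1 := by intro s; cases s <;> norm_num [hsg]
    set av : Fin n → EuclideanSpace ℝ (Fin d) :=
      fun t => comb z0 ι κ⁻¹ (J t) (fun p => τ⁻¹ * sg (c (R t) p)) with hav
    set θv : Fin n → EuclideanSpace ℝ (Fin d) :=
      fun t => comb z0 ι (-(β*κ)) (J t) (fun p => (γ*τ/(b:ℝ)) * sg (c (R t) p)) with hθv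
    set θs : EuclideanSpace ℝ (Fin d) :=
      comb z0 ι (-(β*κ)) ⟨0, hm₀1⟩ (fun _ => (0:ℝ)) with hθs
    have hκκ : κ⁻¹ * -(β*κ) = -β := by
      field_simp
    have hinner_star : ∀ s : Fin n, ⟪av s, θs⟫ = -β := by
      intro s
      rw [hav, hθs]
      rw [inner_comb z0 ι hz hinj]
      have h0 : (if J s = (⟨0, hm₀1⟩ : Fin m₀) then
          ∑ p : Fin b, (τ⁻¹ * sg (c (R s) p)) * (0:ℝ) else 0) = 0 := by
        split <;> simp
      rw [h0, hκκ, add_zero]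
    have hsgsum : ∀ x y : Fin b → Bool,
        (∑ p : Fin b, (τ⁻¹ * sg (x p)) * ((γ*τ/(b:ℝ)) * sg (y p)))
        = γ * ((b:ℝ) - 2 * dH x y) / b := by
      intro x y
      have hterm : ∀ p : Fin b, (τ⁻¹ * sg (x p)) * ((γ*τ/(b:ℝ)) * sg (y p))
          = (γ/(b:ℝ)) * (sg (x p) * sg (y p)) := by
        intro p
        field_simp
      rw [Finset.sum_congr rfl (fun p _ => hterm p), ← Finset.mul_sum]
      have hpt : ∀ p : Fin b, sg (x p) * sg (y p)
          = 1 - 2 * (if x p ≠ y p then (1:ℝ) else 0) := by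
        intro p
        by_cases h : x p = y p
        · rw [if_neg (by simp [h]), h, hsg1]; ring
        · rw [if_pos h]
          cases hxp : x p <;> cases hyp : y p
          · exact absurd (hxp.trans hyp.symm) h
          · norm_num [hsg]
          · norm_num [hsg]
          · exact absurd (hxp.trans hyp.symm) h
      rw [Finset.sum_congr rfl (fun p _ => hpt p)]
      rw [Finset.sum_sub_distrib, Finset.sum_const, Finset.card_univ, Fintype.card_fin,
        ← Finset.mul_sum, Finset.sum_boole]
      have : (Finset.filter (fun p => x p ≠ y p) Finset.univ).card = dH x y := rfl
      rw [this]
      push_cast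
      field_simp
      try ring
    have hinner_aθ : ∀ s t : Fin n, ⟪av s, θv t⟫ =
        -β + (if J s = J t then γ * ((b:ℝ) - 2 * dH (c (R s)) (c (R t))) / b else 0) := by
      intro s t
      rw [hav, hθv, inner_comb z0 ι hz hinj, hκκ]
      congr 1
      split
      · exact hsgsum _ _
      · rfl
    -- norms
    have hanorm : ∀ t : Fin n, ‖av t‖ ≤ 1 := by
      intro t
      apply norm_le_of_sq_le (by norm_num)
      rw [hav, norm_comb_sq z0 ι hz hinj]
      have h1 : (κ⁻¹)^2 = (2:ℝ)⁻¹ := by rw [inv_pow, hκsq]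
      have h2 : ∀ p : Fin b, (τ⁻¹ * sg (c (R t) p))^2 = (2*(b:ℝ))⁻¹ := by
        intro p
        rw [mul_pow, hsg2, mul_one, inv_pow, hτsq]
      rw [h1, Finset.sum_congr rfl (fun p _ => h2 p), Finset.sum_const, Finset.card_univ,
        Fintype.card_fin]
      rw [nsmul_eq_mul]
      have h3 : (b:ℝ) * (2*(b:ℝ))⁻¹ = 2⁻¹ := by
        field_simp
        try ring
      rw [h3]
      norm_num
    have hθnormsq : ∀ t : Fin n, ‖θv t‖^2 = 2*β^2 + 2*γ^2 := by
      intro t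
      rw [hθv, norm_comb_sq z0 ι hz hinj]
      have h1 : (-(β*κ))^2 = 2*β^2 := by
        rw [neg_pow, mul_pow, hκsq]; ring
      have h2 : ∀ p : Fin b, ((γ*τ/(b:ℝ)) * sg (c (R t) p))^2 = 2*γ^2/(b:ℝ) := by
        intro p
        rw [mul_pow, hsg2, mul_one, div_pow, mul_pow, hτsq]
        field_simp
      rw [h1, Finset.sum_congr rfl (fun p _ => h2 p), Finset.sum_const, Finset.card_univ,
        Fintype.card_fin, nsmul_eq_mul]
      field_simp
      try ring
    have hθnorm : ∀ t : Fin n, ‖θv t‖ ≤ S := by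
      intro t
      apply norm_le_of_sq_le hS0
      rw [hθnormsq t, hβ, hγ]
      nlinarith
    have hθsnorm : ‖θs‖ ≤ S := by
      apply norm_le_of_sq_le hS0
      rw [hθs, norm_comb_sq z0 ι hz hinj]
      have h1 : (-(β*κ))^2 = 2*β^2 := by
        rw [neg_pow, mul_pow, hκsq]; ring
      rw [h1]
      have h2 : (∑ _p : Fin b, ((fun _ : Fin b => (0:ℝ)) _p)^2) = 0 := by simp
      rw [h2, hβ]
      nlinarith
    -- the length bound
    have hnbound : ((d : ℝ) - 1) / (4 * b) * Real.exp ((b:ℝ) / 4300) ≤ (n:ℝ) := by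
      have hm₀R : ((d:ℝ)-1)/(2*(b:ℝ)) ≤ (m₀:ℝ) := by
        have h1 : d - 1 < b * m₀ + b := by
          have h2 := Nat.div_add_mod (d-1) b
          have h3 := Nat.mod_lt (d-1) hb0
          rw [hm₀]
          omega
        have h1R : (d:ℝ) - 1 < (b:ℝ)*(m₀:ℝ) + b := by
          have : ((d - 1 : ℕ) : ℝ) = (d:ℝ) - 1 := by
            rw [Nat.cast_sub (by omega)]; norm_num
          rw [← this]
          exact_mod_cast h1
        have h2 : (b:ℝ) ≤ (b:ℝ)*(m₀:ℝ) := by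
          have : (1:ℝ) ≤ (m₀:ℝ) := by exact_mod_cast hm₀1
          nlinarith
        rw [div_le_iff₀ (by positivity)]
        nlinarith
      have hnR : (n:ℝ) = (m₀:ℝ) * (N:ℝ) := by rw [hn]; push_cast; ring
      calc ((d : ℝ) - 1) / (4 * b) * Real.exp ((b:ℝ) / 4300)
          = (((d:ℝ)-1)/(2*(b:ℝ))) * (Real.exp ((b:ℝ)/4300)/2) := by ring
      _ ≤ (m₀:ℝ) * (N:ℝ) := by
          apply mul_le_mul hm₀R hNge (by positivity) (by positivity)
      _ = (n:ℝ) := hnR.symm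
    refine ⟨θs, hθsnorm, n, hnbound, av, θv, hanorm, hθnorm, ?_⟩
    intro t
    constructor
    · -- sum over earlier indices
      set Bnd : ℝ := γ * Real.exp (-β) + Real.exp (2 - (r:ℝ)) with hBnd
      have hBnd0 : 0 ≤ Bnd := by rw [hBnd]; positivity
      have hg : ∀ i : Fin n, i ≠ t →
          logisticExcess μ θs (θv t) (av i) ≤
            (if J i = J t ∧ i ≠ t then Bnd else 0) := by
        intro i hit
        rw [logisticExcess_eq_F μ hμ, hinner_star i, hinner_aθ i t]
        by_cases hJi : J i = J t
        · rw [if_pos hJi, if_pos ⟨hJi, hit⟩]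
          set D : ℕ := dH (c (R i)) (c (R t)) with hD
          have hRne : R i ≠ R t := by
            intro hRe
            exact hit (hJR i t hJi hRe)
          have hcne : (R i) ≠ (R t) := hRne
          have hrD : r ≤ D := hc (R i) (R t) hcne
          have hDb : D ≤ b := by
            rw [hD]
            calc dH (c (R i)) (c (R t)) ≤ (Finset.univ : Finset (Fin b)).card :=
                  Finset.card_filter_le _ _
            _ = b := by rw [Finset.card_univ, Fintype.card_fin]
          have hrDR : (r:ℝ) ≤ (D:ℝ) := by exact_mod_cast hrD
          have hDbR : (D:ℝ) ≤ (b:ℝ) := by exact_mod_cast hDb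
          set y : ℝ := -β + γ * ((b:ℝ) - 2 * (D:ℝ)) / b with hy
          have hxy : -β - y ≤ γ := by
            rw [hy]
            have h1 : γ * ((b:ℝ) - 2*(D:ℝ))/b ≥ -γ := by
              rw [ge_iff_le, neg_le, ← neg_div, ← neg_mul]
              rw [div_le_iff₀ hbRpos]
              have : -((b:ℝ) - 2*(D:ℝ)) ≤ (b:ℝ) := by linarith
              nlinarith
            linarith
          have hF := F_le (x := -β) (y := y) (Δ := γ) (by linarith) hγpos.le
          have hylt : y ≤ 2 - (r:ℝ) := by
            rw [hy]
            have h1 : γ * ((b:ℝ) - 2*(D:ℝ))/b ≤ γ * ((b:ℝ) - 2*(r:ℝ))/b := by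
              have hnum : γ * ((b:ℝ) - 2*(D:ℝ)) ≤ γ * ((b:ℝ) - 2*(r:ℝ)) :=
                mul_le_mul_of_nonneg_left (by linarith) hγpos.le
              rw [div_le_div_iff₀ hbRpos hbRpos]
              exact mul_le_mul_of_nonneg_right hnum hbRpos.le
            have h2 : -β + γ * ((b:ℝ) - 2*(r:ℝ))/b = 2 - S * (r:ℝ)/b := by
              rw [hβ, hγ]
              field_simp
              ring
            have h3 : (r:ℝ) ≤ S * (r:ℝ)/b := by
              rw [le_div_iff₀ hbRpos]
              have hr0 : (0:ℝ) ≤ (r:ℝ) := by positivity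
              nlinarith
            linarith
          have hey : Real.exp y ≤ Real.exp (2 - (r:ℝ)) := Real.exp_le_exp.mpr hylt
          rw [hBnd]
          calc F (-β) y ≤ Real.exp (-β) * γ + Real.exp y := hF
          _ ≤ γ * Real.exp (-β) + Real.exp (2 - (r:ℝ)) := by
              rw [mul_comm]
              linarith
        · rw [if_neg hJi, if_neg (by tauto), add_zero, F_self]
      have hcard : (Finset.univ.filter (fun i : Fin n => J i = J t ∧ i ≠ t)).card ≤ N := by
        have hinj2 : ∀ i ∈ Finset.univ.filter (fun i : Fin n => J i = J t ∧ i ≠ t),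
            ∀ i' ∈ Finset.univ.filter (fun i : Fin n => J i = J t ∧ i ≠ t),
            R i = R i' → i = i' := by
          intro i hi i' hi' hR'
          have h1 := (Finset.mem_filter.mp hi).2.1
          have h2 := (Finset.mem_filter.mp hi').2.1
          exact hJR i i' (h1.trans h2.symm) hR'
        calc (Finset.univ.filter (fun i : Fin n => J i = J t ∧ i ≠ t)).card
            ≤ (Finset.univ : Finset (Fin N)).card :=
              Finset.card_le_card_of_injOn R (fun _ _ => Finset.mem_univ _) hinj2
        _ = N := by rw [Finset.card_univ, Fintype.card_fin]
      calc (∑ i ∈ Finset.univ.filter (fun i => i < t), logisticExcess μ θs (θv t) (av i))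
          ≤ ∑ i ∈ Finset.univ.filter (fun i => i < t),
              (if J i = J t ∧ i ≠ t then Bnd else 0) := by
            apply Finset.sum_le_sum
            intro i hi
            exact hg i (Fin.ne_of_lt (Finset.mem_filter.mp hi).2)
      _ ≤ ∑ i : Fin n, (if J i = J t ∧ i ≠ t then Bnd else 0) := by
            apply Finset.sum_le_sum_of_subset_of_nonneg (Finset.filter_subset _ _)
            intro i _ _
            split
            · exact hBnd0
            · exact le_refl 0
      _ = (Finset.univ.filter (fun i : Fin n => J i = J t ∧ i ≠ t)).card • Bnd := by
            rw [← Finset.sum_filter, Finset.sum_const]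
      _ ≤ (N:ℝ) * Bnd := by
            rw [nsmul_eq_mul]
            apply mul_le_mul_of_nonneg_right _ hBnd0
            exact_mod_cast hcard
      _ ≤ 1/8 := by
            have hrRb : (b:ℝ) ≤ 1000*(r:ℝ) := by
              have h1 : b ≤ 1000 * r := by omega
              exact_mod_cast h1
            have claimA : (N:ℝ) * (γ * Real.exp (-β)) ≤ 1/16 := by
              have e1 : (N:ℝ) ≤ Real.exp (S/4300) := by
                apply hNle.trans (Real.exp_le_exp.mpr (by linarith))
              have e2 : γ ≤ 500 * Real.exp (S/1000 - 1) := by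
                have h1 : S/1000 ≤ Real.exp (S/1000 - 1) := by
                  have := Real.add_one_le_exp (S/1000 - 1)
                  linarith
                rw [hγ]; linarith
              have e3 : Real.exp (-β) = Real.exp (2 - S/2) := by
                rw [hβ, hγ]; ring_nf
              have echain : (N:ℝ) * (γ * Real.exp (-β)) ≤
                  Real.exp (S/4300) * (500 * Real.exp (S/1000 - 1) * Real.exp (2 - S/2)) := by
                rw [e3]
                apply mul_le_mul e1 _ (by positivity) (by positivity)
                apply mul_le_mul_of_nonneg_right e2 (by positivity)
              have eeq : Real.exp (S/4300) * (500 * Real.exp (S/1000 - 1) * Real.exp (2 - S/2))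
                  = 500 * Real.exp (S/4300 + (S/1000 - 1) + (2 - S/2)) := by
                rw [Real.exp_add, Real.exp_add]; ring
              have eexp : Real.exp (S/4300 + (S/1000 - 1) + (2 - S/2)) ≤ Real.exp (-10) := by
                apply Real.exp_le_exp.mpr
                linarith
              have efin : (500:ℝ) * Real.exp (-10) ≤ 1/16 := by
                have h1 : (8000:ℝ) ≤ Real.exp 10 := by
                  have h2 : (2.7182818283:ℝ) < Real.exp 1 := Real.exp_one_gt_d9
                  have h3 : Real.exp 10 = (Real.exp 1)^10 := by
                    rw [← Real.exp_nat_mul]; norm_num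
                  have h4 : (2.7:ℝ)^10 ≤ (Real.exp 1)^10 :=
                    pow_le_pow_left₀ (by norm_num) (by linarith) 10
                  rw [h3]
                  norm_num at h4 ⊢
                  linarith
                have h6 : Real.exp (-10) ≤ 1/8000 := by
                  rw [Real.exp_neg, inv_le_comm₀ (Real.exp_pos 10) (by norm_num)]
                  linarith
                have h7 := Real.exp_pos (-10)
                linarith
              calc (N:ℝ) * (γ * Real.exp (-β)) ≤ 500 * Real.exp (S/4300 + (S/1000 - 1) + (2 - S/2)) := by
                    rw [← eeq]; exact echain
              _ ≤ 500 * Real.exp (-10) := by linarith [eexp]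
              _ ≤ 1/16 := efin
            have claimB : (N:ℝ) * Real.exp (2 - (r:ℝ)) ≤ 1/16 := by
              have e1 : (N:ℝ) * Real.exp (2 - (r:ℝ)) ≤
                  Real.exp ((b:ℝ)/4300) * Real.exp (2 - (r:ℝ)) := by
                apply mul_le_mul_of_nonneg_right hNle (by positivity)
              have e2 : Real.exp ((b:ℝ)/4300) * Real.exp (2 - (r:ℝ))
                  = Real.exp ((b:ℝ)/4300 + 2 - (r:ℝ)) := by
                rw [← Real.exp_add]; ring_nf
              have e3 : (b:ℝ)/4300 + 2 - (r:ℝ) ≤ -4 := by linarith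
              have e4 : Real.exp ((b:ℝ)/4300 + 2 - (r:ℝ)) ≤ Real.exp (-4) :=
                Real.exp_le_exp.mpr e3
              have e5 : Real.exp (-4) ≤ 1/16 := by
                have h1 : (53:ℝ) ≤ Real.exp 4 := exp4_big
                rw [Real.exp_neg]
                rw [inv_le_comm₀ (Real.exp_pos 4) (by norm_num)]
                linarith
              linarith
            rw [hBnd]
            have : (N:ℝ) * (γ * Real.exp (-β) + Real.exp (2 - (r:ℝ)))
                = (N:ℝ) * (γ * Real.exp (-β)) + (N:ℝ) * Real.exp (2 - (r:ℝ)) := by ring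
            rw [this]
            linarith
    · -- the diagonal term
      rw [logisticExcess_eq_F μ hμ, hinner_star t, hinner_aθ t t, if_pos rfl, dH_self]
      have hdiag : -β + γ * ((b:ℝ) - 2 * ((0:ℕ):ℝ)) / b = 2 := by
        push_cast [Nat.cast_zero]
        rw [mul_zero, sub_zero, mul_div_assoc, div_self hbRpos.ne', mul_one, hβ, hγ]
        ring
      simp only [Nat.cast_zero] at hdiag ⊢
      rw [hdiag]
      exact F_lowB hβ4
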